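/- Let n ≥ 4 be an integer, let K be an abstract triangulation whose boundary ∂K is the cycle graph C_n, fix vertices x, y of C_n that are not adjacent in C_n, and let L and R denote the two connected components of C_n − x − y. If S ⊆ V(K)\{x,y} separates L from R in K − x − y, then there exists a path from x to y in the 1-skeleton of K all of whose internal vertices belong to S. -/

import Mathlib

open SimpleGraph Finset

/-- An abstract triangulation: a finite nonempty set of triangles (3-element
vertex sets) such that every edge (2-element subset of a triangle) lies in
exactly 1 or 2 triangles. -/
structure AbstractTriangulation (V : Type) [DecidableEq V] [Fintype V] where
  tris : Finset (Finset V)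
  tris_nonempty : tris.Nonempty
  card_three : ∀ t ∈ tris, t.card = 3
  edge_mem : ∀ e : Finset V, e.card = 2 → (∃ t ∈ tris, e ⊆ t) →
    (tris.filter fun t => e ⊆ t).card = 1 ∨ (tris.filter fun t => e ⊆ t).card = 2

namespace AbstractTriangulation

variable {V : Type} [DecidableEq V] [Fintype V]

/-- The vertex set `V(K)`: vertices lying in some triangle. -/
def verts (K : AbstractTriangulation V) : Finset V := K.tris.biUnion id

/-- The edge set `E(K)`: 2-element subsets of triangles. -/
def edges (K : AbstractTriangulation V) : Finset (Finset V) :=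
  K.tris.biUnion fun t => t.powersetCard 2

/-- The 1-skeleton of `K`: `u,v` adjacent iff `{u,v}` is an edge of `K`. -/
def skeleton (K : AbstractTriangulation V) : SimpleGraph V where
  Adj u v := u ≠ v ∧ ∃ t ∈ K.tris, u ∈ t ∧ v ∈ t
  symm := ⟨by rintro u v ⟨h, t, ht, hu, hv⟩; exact ⟨h.symm, t, ht, hv, hu⟩⟩
  loopless := ⟨by rintro u ⟨h, -⟩; exact h rfl⟩

/-- The boundary `∂K`: the graph on the vertices of `K` whose edges are the
edges of `K` contained in exactly one triangle. -/
def boundary (K : AbstractTriangulation V) : SimpleGraph V where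
  Adj u v := u ≠ v ∧ (K.tris.filter fun t => u ∈ t ∧ v ∈ t).card = 1
  symm := ⟨by
    rintro u v ⟨h, hc⟩
    exact ⟨h.symm, by simpa [and_comm] using hc⟩⟩
  loopless := ⟨by rintro u ⟨h, -⟩; exact h rfl⟩

/-- `∂K` is (isomorphic to) the cycle `C_n`, with the identification given by
`f : Fin n → V`: `f` is injective, boundary adjacency corresponds exactly to
cycle adjacency, and every boundary edge joins two vertices in the image of `f`. -/
def BoundaryIsCycle (K : AbstractTriangulation V) (n : ℕ) (f : Fin n → V) : Prop :=
  Function.Injective f ∧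
  (∀ i j : Fin n, K.boundary.Adj (f i) (f j) ↔ (cycleGraph n).Adj i j) ∧
  (∀ u v : V, K.boundary.Adj u v → (∃ i, u = f i) ∧ (∃ j, v = f j))

/-- `K` is a `δ`-Lipschitz filling of `C_n` (with boundary identification `f`):
`∂K = C_n` and `d_K(x,y) ≥ δ · d_{C_n}(x,y)` for all boundary vertices, expressed
by the fact that every walk in the 1-skeleton between boundary vertices has
length at least `δ · d_{C_n}(x,y)`. -/
def IsLipschitzFilling (K : AbstractTriangulation V) (n : ℕ) (δ : ℝ)
    (f : Fin n → V) : Prop :=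
  K.BoundaryIsCycle n f ∧
  ∀ (i j : Fin n) (p : K.skeleton.Walk (f i) (f j)),
    δ * ((cycleGraph n).dist i j : ℝ) ≤ (p.length : ℝ)

end AbstractTriangulation

/-- The cycle graph `C_n` with the vertices `x` and `y` deleted (as a graph on
`Fin n` in which `x` and `y` have become isolated). -/
def deletedCycle (n : ℕ) (x y : Fin n) : SimpleGraph (Fin n) where
  Adj u v := (SimpleGraph.cycleGraph n).Adj u v ∧ u ≠ x ∧ u ≠ y ∧ v ≠ x ∧ v ≠ y
  symm := ⟨by rintro u v ⟨h, h1, h2, h3, h4⟩; exact ⟨h.symm, h3, h4, h1, h2⟩⟩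
  loopless := ⟨by rintro u ⟨h, -⟩; exact h.ne rfl⟩


section SpernerAux

open scoped Classical

/-- In a finite graph, a vertex of odd degree is connected to another vertex
of odd degree. -/
lemma odd_reachable {W : Type} [Fintype W] [DecidableEq W] (G : SimpleGraph W)
    [DecidableRel G.Adj] (a : W) (h : Odd (G.degree a)) :
    ∃ b, b ≠ a ∧ G.Reachable a b ∧ Odd (G.degree b) := by
  classical
  let G' : SimpleGraph W :=
    { Adj := fun u v => G.Adj u v ∧ G.Reachable a u ∧ G.Reachable a v
      symm := ⟨by rintro u v ⟨h1, h2, h3⟩; exact ⟨h1.symm, h3, h2⟩⟩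
      loopless := ⟨by rintro u ⟨h1, _⟩; exact h1.ne rfl⟩ }
  have hset : ∀ u, G.Reachable a u → G'.neighborSet u = G.neighborSet u := by
    intro u hu
    ext w
    simp only [SimpleGraph.mem_neighborSet]
    constructor
    · rintro ⟨h1, -, -⟩; exact h1
    · intro h1; exact ⟨h1, hu, hu.trans h1.reachable⟩
  have hdeg : ∀ u, G.Reachable a u → G'.degree u = G.degree u := by
    intro u hu
    rw [← SimpleGraph.card_neighborSet_eq_degree, ← SimpleGraph.card_neighborSet_eq_degree]
    exact Fintype.card_congr (Equiv.setCongr (hset u hu))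
  have ha' : Odd (G'.degree a) := by rw [hdeg a (by rfl)]; exact h
  have hodd := G'.odd_card_odd_degree_vertices_ne a ha'
  have hpos : 0 < (Finset.univ.filter fun w => w ≠ a ∧ Odd (G'.degree w)).card := by
    rcases hodd with ⟨k, hk⟩; omega
  obtain ⟨b, hb⟩ := Finset.card_pos.mp hpos
  rw [Finset.mem_filter] at hb
  obtain ⟨-, hba, hbodd⟩ := hb
  have hbpos : 0 < G'.degree b := by rcases hbodd with ⟨k, hk⟩; omega
  obtain ⟨w, hw⟩ := (G'.degree_pos_iff_exists_adj b).mp hbpos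
  have hreach : G.Reachable a b := hw.2.1
  refine ⟨b, hba, hreach, ?_⟩
  rw [← hdeg b hreach]; exact hbodd

variable {V : Type} [DecidableEq V] [Fintype V]

/-- A door: an edge of the triangulation with one `black` and one non-`black`
endpoint. -/
def IsDoor (K : AbstractTriangulation V) (black : V → Prop) (d : Finset V) : Prop :=
  (∃ t ∈ K.tris, d ⊆ t) ∧ ∃ u v : V, black u ∧ ¬ black v ∧ d = {u, v}

/-- The graph on doors: two doors are adjacent when they lie in a common
triangle. -/
def doorGraph (K : AbstractTriangulation V) (black : V → Prop) :
    SimpleGraph (Finset V) where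
  Adj d d' := d ≠ d' ∧ IsDoor K black d ∧ IsDoor K black d' ∧
    ∃ t ∈ K.tris, d ⊆ t ∧ d' ⊆ t
  symm := ⟨by rintro d d' ⟨h1, h2, h3, t, ht, hd, hd'⟩; exact ⟨h1.symm, h3, h2, t, ht, hd', hd⟩⟩
  loopless := ⟨by rintro d ⟨h1, -⟩; exact h1 rfl⟩

/-- The third vertex of a triangle containing a given edge. -/
noncomputable def thirdVertex (d t : Finset V) (dflt : V) : V :=
  if h : (t \ d).Nonempty then h.choose else dflt

lemma thirdVertex_spec {d t : Finset V} (dflt : V) (hsub : d ⊆ t)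
    (ht3 : t.card = 3) (hd2 : d.card = 2) :
    t \ d = {thirdVertex d t dflt} := by
  have hc : (t \ d).card = 1 := by rw [Finset.card_sdiff_of_subset hsub, ht3, hd2]
  have hne : (t \ d).Nonempty := by rw [← Finset.card_pos, hc]; omega
  have hmem : thirdVertex d t dflt ∈ t \ d := by
    unfold thirdVertex; rw [dif_pos hne]; exact hne.choose_spec
  obtain ⟨a, ha⟩ := Finset.card_eq_one.mp hc
  rw [ha] at hmem ⊢
  rw [Finset.mem_singleton] at hmem
  rw [hmem]

lemma doorGraph_degree_nondoor (K : AbstractTriangulation V) (black : V → Prop)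
    (d : Finset V) (hd : ¬ IsDoor K black d) :
    (doorGraph K black).degree d = 0 := by
  rw [SimpleGraph.degree, Finset.card_eq_zero]
  ext d'
  simp only [SimpleGraph.mem_neighborFinset, Finset.notMem_empty, iff_false]
  rintro ⟨-, hdd, -, -⟩
  exact hd hdd

lemma doorGraph_degree (K : AbstractTriangulation V) (black : V → Prop)
    (d : Finset V) (hd : IsDoor K black d) :
    (doorGraph K black).degree d = (K.tris.filter fun t => d ⊆ t).card := by
  classical
  obtain ⟨⟨t0, ht0, hdt0⟩, u, v, hu, hv, hduv⟩ := hd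
  have huv : u ≠ v := fun h => hv (h ▸ hu)
  have hd2 : d.card = 2 := by rw [hduv]; exact Finset.card_pair huv
  have hdoor : IsDoor K black d := ⟨⟨t0, ht0, hdt0⟩, u, v, hu, hv, hduv⟩
  -- facts about triangles containing d
  have key : ∀ t ∈ K.tris.filter (fun t => d ⊆ t),
      thirdVertex d t u ∈ t ∧ thirdVertex d t u ∉ d ∧ d ∪ {thirdVertex d t u} = t := by
    intro t ht
    rw [Finset.mem_filter] at ht
    obtain ⟨ht, hsub⟩ := ht
    have h3 := K.card_three t ht
    have hspec := thirdVertex_spec u hsub h3 hd2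
    set c := thirdVertex d t u with hc
    have hmem : c ∈ t \ d := by rw [hspec]; exact Finset.mem_singleton_self c
    rw [Finset.mem_sdiff] at hmem
    refine ⟨hmem.1, hmem.2, ?_⟩
    have := Finset.union_sdiff_of_subset hsub
    rw [hspec] at this
    exact this
  rw [SimpleGraph.degree]
  symm
  apply Finset.card_bij (fun t ht =>
    if black (thirdVertex d t u) then ({thirdVertex d t u, v} : Finset V)
    else ({u, thirdVertex d t u} : Finset V))
  · -- maps into neighborFinset
    intro t ht
    obtain ⟨hct, hcd, hcup⟩ := key t ht
    rw [Finset.mem_filter] at ht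
    obtain ⟨htris, hsub⟩ := ht
    set c := thirdVertex d t u with hc
    have humem : u ∈ d := by rw [hduv]; exact Finset.mem_insert_self u _
    have hvmem : v ∈ d := by rw [hduv]; exact Finset.mem_insert_of_mem (Finset.mem_singleton_self v)
    rw [SimpleGraph.mem_neighborFinset]
    by_cases hb : black c
    · rw [if_pos hb]
      have hne : d ≠ ({c, v} : Finset V) := by
        intro h
        apply hcd; rw [h]; exact Finset.mem_insert_self c _
      have hsub' : ({c, v} : Finset V) ⊆ t := by
        intro z hz
        rcases Finset.mem_insert.mp hz with h | h
        · rw [h]; exact hct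
        · rw [Finset.mem_singleton] at h; rw [h]; exact hsub hvmem
      exact ⟨hne, hdoor, ⟨⟨t, htris, hsub'⟩, c, v, hb, hv, rfl⟩,
        t, htris, hsub, hsub'⟩
    · rw [if_neg hb]
      have hne : d ≠ ({u, c} : Finset V) := by
        intro h
        apply hcd; rw [h]; exact Finset.mem_insert_of_mem (Finset.mem_singleton_self c)
      have hsub' : ({u, c} : Finset V) ⊆ t := by
        intro z hz
        rcases Finset.mem_insert.mp hz with h | h
        · rw [h]; exact hsub humem
        · rw [Finset.mem_singleton] at h; rw [h]; exact hct
      exact ⟨hne, hdoor, ⟨⟨t, htris, hsub'⟩, u, c, hu, hb, rfl⟩,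
        t, htris, hsub, hsub'⟩
  · -- injective
    intro t1 ht1 t2 ht2 heq
    obtain ⟨-, -, hcup1⟩ := key t1 ht1
    obtain ⟨-, -, hcup2⟩ := key t2 ht2
    have humem : u ∈ d := by rw [hduv]; exact Finset.mem_insert_self u _
    have hvmem : v ∈ d := by
      rw [hduv]; exact Finset.mem_insert_of_mem (Finset.mem_singleton_self v)
    have hrec : ∀ t, t ∈ K.tris.filter (fun t => d ⊆ t) →
        d ∪ (if black (thirdVertex d t u) then ({thirdVertex d t u, v} : Finset V)
          else ({u, thirdVertex d t u} : Finset V)) = t := by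
      intro t ht
      obtain ⟨-, -, hcup⟩ := key t ht
      set c := thirdVertex d t u with hc
      by_cases hb : black c
      · rw [if_pos hb, ← hcup]
        ext z
        simp only [Finset.mem_union, Finset.mem_insert, Finset.mem_singleton]
        constructor
        · rintro (h | h | h)
          · exact Or.inl h
          · exact Or.inr h
          · exact Or.inl (h ▸ hvmem)
        · rintro (h | h)
          · exact Or.inl h
          · exact Or.inr (Or.inl h)
      · rw [if_neg hb, ← hcup]
        ext z
        simp only [Finset.mem_union, Finset.mem_insert, Finset.mem_singleton]
        constructor
        · rintro (h | h | h)
          · exact Or.inl h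
          · exact Or.inl (h ▸ humem)
          · exact Or.inr h
        · rintro (h | h)
          · exact Or.inl h
          · exact Or.inr (Or.inr h)
    rw [← hrec t1 ht1, ← hrec t2 ht2, heq]
  · -- surjective
    intro d' hd'
    rw [SimpleGraph.mem_neighborFinset] at hd'
    obtain ⟨hne, -, hd'door, t, htris, hdt, hd't⟩ := hd'
    have htf : t ∈ K.tris.filter (fun t => d ⊆ t) := Finset.mem_filter.mpr ⟨htris, hdt⟩
    refine ⟨t, htf, ?_⟩
    obtain ⟨hct, hcd, hcup⟩ := key t htf
    set c := thirdVertex d t u with hc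
    obtain ⟨-, u', v', hu', hv', hd'uv⟩ := hd'door
    have hd'2 : d'.card = 2 := by
      rw [hd'uv]; exact Finset.card_pair (fun h => hv' (h ▸ hu'))
    -- c ∈ d'
    have hcd' : c ∈ d' := by
      by_contra hcnot
      have hsubd : d' ⊆ d := by
        intro z hz
        have hzt : z ∈ t := hd't hz
        rw [← hcup] at hzt
        rcases Finset.mem_union.mp hzt with h | h
        · exact h
        · rw [Finset.mem_singleton] at h
          exact absurd (h ▸ hz) hcnot
      have : d' = d := Finset.eq_of_subset_of_card_le hsubd (by omega)
      exact hne this.symm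
    have hmemd' : ∀ z ∈ d', z = c ∨ z = u ∨ z = v := by
      intro z hz
      have hzt : z ∈ t := hd't hz
      rw [← hcup] at hzt
      rcases Finset.mem_union.mp hzt with h | h
      · rw [hduv] at h
        rcases Finset.mem_insert.mp h with h | h
        · exact Or.inr (Or.inl h)
        · exact Or.inr (Or.inr (Finset.mem_singleton.mp h))
      · exact Or.inl (Finset.mem_singleton.mp h)
    have hu'm : u' ∈ d' := by rw [hd'uv]; exact Finset.mem_insert_self _ _
    have hv'm : v' ∈ d' := by
      rw [hd'uv]; exact Finset.mem_insert_of_mem (Finset.mem_singleton_self _)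
    have hu'v' : u' ≠ v' := fun h => hv' (h ▸ hu')
    have hother : d' = {c, u} ∨ d' = {c, v} := by
      have hcu' : c = u' ∨ c = v' := by
        have hm := hcd'
        rw [hd'uv] at hm
        rcases Finset.mem_insert.mp hm with h | h
        · exact Or.inl h
        · exact Or.inr (Finset.mem_singleton.mp h)
      rcases hcu' with h | h
      · rcases hmemd' v' hv'm with h2 | h2 | h2
        · exact absurd (h.symm.trans h2.symm) hu'v'
        · left; rw [hd'uv, ← h, h2]
        · right; rw [hd'uv, ← h, h2]
      · rcases hmemd' u' hu'm with h2 | h2 | h2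
        · exact absurd (h2.trans h) hu'v'
        · left; rw [hd'uv, ← h, h2, Finset.pair_comm]
        · right; rw [hd'uv, ← h, h2, Finset.pair_comm]
    by_cases hb : black c
    · rw [if_pos hb]
      rcases hother with h | h
      · exfalso
        have hvm : v' ∈ ({c, u} : Finset V) := h ▸ hv'm
        rcases Finset.mem_insert.mp hvm with h' | h'
        · exact hv' (by rw [h']; exact hb)
        · exact hv' (by rw [Finset.mem_singleton.mp h']; exact hu)
      · rw [h]
    · rw [if_neg hb]
      rcases hother with h | h
      · rw [h, Finset.pair_comm]
      · exfalso
        have hum : u' ∈ ({c, v} : Finset V) := h ▸ hu'm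
        rcases Finset.mem_insert.mp hum with h' | h'
        · exact hb (h' ▸ hu')
        · exact hv (Finset.mem_singleton.mp h' ▸ hu')

/-- Lifting a walk in the door graph to a walk in the skeleton through `good`
vertices. -/
lemma walk_lift (K : AbstractTriangulation V) (black : V → Prop) (good : V → Prop)
    (hgood : ∀ d, IsDoor K black d → ∃ z ∈ d, good z) :
    ∀ {d d' : Finset V} (p : (doorGraph K black).Walk d d') (z' : V),
      z' ∈ d' → good z' → IsDoor K black d →
      ∃ z ∈ d, good z ∧ ∃ q : K.skeleton.Walk z z', ∀ w ∈ q.support, good w := by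
  intro d d' p
  induction p with
  | nil =>
    intro z' hz' hgz' _
    refine ⟨z', hz', hgz', SimpleGraph.Walk.nil, ?_⟩
    intro w hw
    rw [SimpleGraph.Walk.support_nil, List.mem_singleton] at hw
    rw [hw]; exact hgz'
  | @cons d m d' h p ih =>
    intro z' hz' hgz' hd
    obtain ⟨hne, hdd, hdm, t, ht, hdt, hmt⟩ := h
    obtain ⟨z'', hz''m, hgz'', q, hq⟩ := ih z' hz' hgz' hdm
    obtain ⟨z, hzd, hgz⟩ := hgood d hd
    by_cases hzz : z = z''
    · subst hzz
      exact ⟨z, hzd, hgz, q, hq⟩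
    · have hadj : K.skeleton.Adj z z'' := ⟨hzz, t, ht, hdt hzd, hmt hz''m⟩
      refine ⟨z, hzd, hgz, SimpleGraph.Walk.cons hadj q, ?_⟩
      intro w hw
      rw [SimpleGraph.Walk.support_cons, List.mem_cons] at hw
      rcases hw with h | h
      · rw [h]; exact hgz
      · exact hq w h

end SpernerAux

section SpernerColor

variable {V : Type} [DecidableEq V] [Fintype V]

/-- The set of vertices reachable from the `L`-side of the boundary while
avoiding `S`, `a` and `b`. -/
def InA (K : AbstractTriangulation V) (S : Set V) (a b : V) (LV : Set V) (v : V) : Prop :=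
  v ∉ S ∧ v ≠ a ∧ v ≠ b ∧ ∃ w ∈ LV, ∃ p : K.skeleton.Walk w v,
    ∀ z ∈ p.support, z ∉ S ∧ z ≠ a ∧ z ≠ b

/-- The black vertices: `a` (= `f x`), the `L`-side reachable set, and the
separator vertices on the `L`-arc of the boundary. -/
def blackD (K : AbstractTriangulation V) (S : Set V) (a b : V) (LV : Set V) (v : V) : Prop :=
  v = a ∨ (v ∈ S ∧ v ∈ LV) ∨ InA K S a b LV v

end SpernerColor

open Fin.NatCast

/-- Sperner-type lemma. If `∂K = C_n`, `x,y` are nonadjacent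
vertices of `C_n`, `L,R` are the two connected components of `C_n - x - y`, and
`S ⊆ V(K) \ {x,y}` separates `L` from `R` in `K - x - y`, then `S` contains all
internal vertices of some path from `x` to `y` in the 1-skeleton of `K`. -/
theorem sperner_separator {V : Type} [DecidableEq V] [Fintype V]
    (n : ℕ) (hn : 4 ≤ n) (K : AbstractTriangulation V) (f : Fin n → V)
    (hbd : K.BoundaryIsCycle n f)
    (x y : Fin n) (hxy : x ≠ y) (hnadj : ¬ (SimpleGraph.cycleGraph n).Adj x y)
    (L R : Set (Fin n))
    (hLne : L.Nonempty) (hRne : R.Nonempty) (hdisj : Disjoint L R)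
    (hxL : x ∉ L) (hyL : y ∉ L) (hxR : x ∉ R) (hyR : y ∉ R)
    (hcover : ∀ u : Fin n, u ≠ x → u ≠ y → u ∈ L ∨ u ∈ R)
    (hLconn : ∀ u ∈ L, ∀ v ∈ L, (deletedCycle n x y).Reachable u v)
    (hRconn : ∀ u ∈ R, ∀ v ∈ R, (deletedCycle n x y).Reachable u v)
    (hLR : ∀ u ∈ L, ∀ v ∈ R, ¬ (deletedCycle n x y).Reachable u v)
    (S : Set V) (hSK : S ⊆ ↑K.verts) (hSx : f x ∉ S) (hSy : f y ∉ S)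
    (hsep : ∀ (u v : V) (p : K.skeleton.Walk u v),
      u ∈ f '' L → v ∈ f '' R → f x ∉ p.support → f y ∉ p.support →
      ∃ s ∈ S, s ∈ p.support) :
    ∃ p : K.skeleton.Walk (f x) (f y), p.IsPath ∧
      ∀ v ∈ p.support, v ≠ f x → v ≠ f y → v ∈ S := by
  classical
  obtain ⟨hfinj, hbadj, hbim⟩ := hbd
  have hNZ : NeZero n := ⟨by omega⟩
  -- ===== Part 1 : arithmetic of the cycle `C_n` =====
  have hcastval : ∀ j : ℕ, j < n → ((j : Fin n)).val = j := fun j h => Fin.val_cast_of_lt h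
  have hfadd_inj : ∀ j k : ℕ, j < n → k < n → x + (j : Fin n) = x + (k : Fin n) → j = k := by
    intro j k hj hk h
    have h2 : (j : Fin n) = (k : Fin n) := add_left_cancel h
    have h3 := congrArg Fin.val h2
    rwa [hcastval j hj, hcastval k hk] at h3
  set D := (y - x).val with hD
  have hDn : D < n := (y - x).isLt
  have hyx0 : y - x ≠ 0 := sub_ne_zero.mpr (Ne.symm hxy)
  have hD0 : 0 < D := by
    rcases Nat.eq_zero_or_pos D with h | h
    · exfalso
      apply hyx0
      apply Fin.ext
      rw [← hD, h]
      simp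
    · exact h
  have hyeq : x + ((D : ℕ) : Fin n) = y := by
    rw [hD, Fin.cast_val_eq_self, add_comm, sub_add_cancel]
  have h1 : (1 : Fin n).val = 1 := by
    rw [← Nat.cast_one]; exact hcastval 1 (by omega)
  have hsub1 : ∀ u v : Fin n, (u - v).val = 1 ↔ u = v + 1 := by
    intro u v
    constructor
    · intro h
      have h2 : u - v = 1 := Fin.ext (by rw [h, h1])
      rw [sub_eq_iff_eq_add] at h2
      rw [h2, add_comm]
    · intro h
      rw [h, add_sub_cancel_left, h1]
  have hADJ : ∀ u v : Fin n, (SimpleGraph.cycleGraph n).Adj u v ↔ (u = v + 1 ∨ v = u + 1) := by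
    intro u v
    rw [SimpleGraph.cycleGraph_adj', hsub1, hsub1]
  have hcastadd : ∀ j : ℕ, ((j + 1 : ℕ) : Fin n) = (j : Fin n) + 1 := by
    intro j; push_cast; ring
  have hconsadj : ∀ j : ℕ, (SimpleGraph.cycleGraph n).Adj (x + (j : Fin n)) (x + ((j+1 : ℕ) : Fin n)) := by
    intro j
    rw [hADJ]
    right
    rw [hcastadd, add_assoc]
  have hne_x : ∀ j : ℕ, 0 < j → j < n → x + (j : Fin n) ≠ x := by
    intro j h0 hn' h
    have h2 : x + (j : Fin n) = x + ((0 : ℕ) : Fin n) := by rw [h]; simp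
    have := hfadd_inj j 0 hn' (by omega) h2
    omega
  have hne_y : ∀ j : ℕ, j < n → j ≠ D → x + (j : Fin n) ≠ y := by
    intro j hj hjD h
    rw [← hyeq] at h
    exact hjD (hfadd_inj j D hj hDn h)
  have hstep : ∀ u v : Fin n, (deletedCycle n x y).Adj u v → (u ∈ L ↔ v ∈ L) := by
    intro u v huv
    obtain ⟨hadj, hux, huy, hvx, hvy⟩ := huv
    have hduv : (deletedCycle n x y).Adj u v := ⟨hadj, hux, huy, hvx, hvy⟩
    have hdvu : (deletedCycle n x y).Adj v u := ⟨hadj.symm, hvx, hvy, hux, huy⟩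
    constructor
    · intro hu
      rcases hcover v hvx hvy with h | h
      · exact h
      · exact absurd hduv.reachable (hLR u hu v h)
    · intro hv'
      rcases hcover u hux huy with h | h
      · exact h
      · exact absurd hdvu.reachable (hLR v hv' u h)
  have hD_ne : D ≠ n - 1 := by
    intro h
    apply hnadj
    rw [hADJ]
    left
    have hz : ((D + 1 : ℕ) : Fin n) = 0 := by
      rw [h, show n - 1 + 1 = n from by omega, Fin.natCast_self]
    rw [← hyeq, add_assoc, ← hcastadd, hz, add_zero]
  have hD2 : 2 ≤ D := by
    rcases Nat.lt_or_ge D 2 with h | h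
    · exfalso
      apply hnadj
      rw [hADJ]
      right
      have hD1 : D = 1 := by omega
      rw [← hyeq, hD1, Nat.cast_one]
    · exact h
  have hDn1 : D + 1 < n := by omega
  have harc1 : ∀ j : ℕ, 0 < j → j < D → ((x + (j : Fin n)) ∈ L ↔ (x + ((1 : ℕ) : Fin n)) ∈ L) := by
    intro j
    induction j with
    | zero => intro h0 _; exact absurd h0 (by omega)
    | succ k ih =>
      intro h0 hD'
      by_cases hk : k = 0
      · subst hk; norm_num
      · have hk0 : 0 < k := Nat.pos_of_ne_zero hk
        have hadjk : (deletedCycle n x y).Adj (x + (k : Fin n)) (x + ((k+1 : ℕ) : Fin n)) :=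
          ⟨hconsadj k, hne_x k hk0 (by omega), hne_y k (by omega) (by omega),
           hne_x (k+1) (by omega) (by omega), hne_y (k+1) (by omega) (by omega)⟩
        rw [← hstep _ _ hadjk]
        exact ih hk0 (by omega)
  have harc2 : ∀ j : ℕ, D < j → j < n → ((x + (j : Fin n)) ∈ L ↔ (x + ((D+1 : ℕ) : Fin n)) ∈ L) := by
    intro j
    induction j with
    | zero => intro h0 _; exact absurd h0 (by omega)
    | succ k ih =>
      intro hDk hkn
      by_cases hk : k = D
      · rw [hk]
      · have hDk' : D < k := by omega
        have hadjk : (deletedCycle n x y).Adj (x + (k : Fin n)) (x + ((k+1 : ℕ) : Fin n)) :=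
          ⟨hconsadj k, hne_x k (by omega) (by omega), hne_y k (by omega) hk,
           hne_x (k+1) (by omega) (by omega), hne_y (k+1) (by omega) (by omega)⟩
        rw [← hstep _ _ hadjk]
        exact ih hDk' (by omega)
  have hrep : ∀ u : Fin n, u ≠ x → u ≠ y → ∃ j : ℕ, 0 < j ∧ j < n ∧ j ≠ D ∧ u = x + (j : Fin n) := by
    intro u hux huy
    refine ⟨(u - x).val, ?_, (u - x).isLt, ?_, ?_⟩
    · have hne0 : u - x ≠ 0 := sub_ne_zero.mpr hux
      rcases Nat.eq_zero_or_pos (u - x).val with h | h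
      · exact absurd (Fin.ext (by rw [h]; simp)) hne0
      · exact h
    · intro h
      apply huy
      have : u - x = y - x := Fin.ext (by rw [h, ← hD])
      have h2 := congrArg (· + x) this
      simpa [sub_add_cancel] using h2
    · rw [Fin.cast_val_eq_self, add_comm, sub_add_cancel]
  -- ===== Part 2 : the two special boundary edges =====
  have hkey : ∃ r0 llast : Fin n, r0 ∈ R ∧ (SimpleGraph.cycleGraph n).Adj x r0 ∧
      llast ∈ L ∧ (SimpleGraph.cycleGraph n).Adj llast y ∧
      ∀ i j : Fin n, (SimpleGraph.cycleGraph n).Adj i j → (i = x ∨ i ∈ L) →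
        (j = y ∨ j ∈ R) → (i = x ∧ j = r0) ∨ (i = llast ∧ j = y) := by
    have hx1ne : x + ((1 : ℕ) : Fin n) ≠ x := hne_x 1 (by omega) (by omega)
    have hx1ney : x + ((1 : ℕ) : Fin n) ≠ y := hne_y 1 (by omega) (by omega)
    have hxm1ne : x + ((n-1 : ℕ) : Fin n) ≠ x := hne_x (n-1) (by omega) (by omega)
    have hxm1ney : x + ((n-1 : ℕ) : Fin n) ≠ y := hne_y (n-1) (by omega) (by omega)
    have hcycm1 : ((n-1 : ℕ) : Fin n) + 1 = 0 := by
      rw [← hcastadd, show n - 1 + 1 = n from by omega, Fin.natCast_self]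
    have hadjxm1 : (SimpleGraph.cycleGraph n).Adj x (x + ((n-1 : ℕ) : Fin n)) := by
      rw [hADJ]; left; rw [add_assoc, hcycm1, add_zero]
    have hadjx1 : (SimpleGraph.cycleGraph n).Adj x (x + ((1 : ℕ) : Fin n)) := by
      rw [hADJ]; right; rw [Nat.cast_one]
    have hadjyD1 : (SimpleGraph.cycleGraph n).Adj (x + ((D+1 : ℕ) : Fin n)) y := by
      rw [hADJ]; left; rw [← hyeq, add_assoc, ← hcastadd]
    have hadjyDm1 : (SimpleGraph.cycleGraph n).Adj (x + ((D-1 : ℕ) : Fin n)) y := by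
      rw [hADJ]; right
      rw [← hyeq, add_assoc, ← hcastadd, show D - 1 + 1 = D from by omega]
    have hD1x : x + ((D+1 : ℕ) : Fin n) ≠ x := hne_x (D+1) (by omega) (by omega)
    have hD1y : x + ((D+1 : ℕ) : Fin n) ≠ y := hne_y (D+1) (by omega) (by omega)
    have hDm1x : x + ((D-1 : ℕ) : Fin n) ≠ x := hne_x (D-1) (by omega) (by omega)
    have hDm1y : x + ((D-1 : ℕ) : Fin n) ≠ y := hne_y (D-1) (by omega) (by omega)
    by_cases hb1 : x + ((1 : ℕ) : Fin n) ∈ L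
    · -- L is the near arc; r0 = x - 1, llast = y - 1
      have hRarc2 : x + ((D+1 : ℕ) : Fin n) ∉ L := by
        obtain ⟨r, hr⟩ := hRne
        have hrx : r ≠ x := fun h => hxR (h ▸ hr)
        have hry : r ≠ y := fun h => hyR (h ▸ hr)
        obtain ⟨j, hj0, hjn, hjD, hju⟩ := hrep r hrx hry
        have hrnL : r ∉ L := fun h => Set.disjoint_left.mp hdisj h hr
        rcases Nat.lt_or_ge j D with h | h
        · exact absurd (by rw [hju, harc1 j hj0 h]; exact hb1) hrnL
        · intro hLmem
          apply hrnL
          rw [hju, harc2 j (by omega) hjn]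
          exact hLmem
      have hr0R : x + ((n-1 : ℕ) : Fin n) ∈ R := by
        have hnotL : x + ((n-1 : ℕ) : Fin n) ∉ L := by
          rw [harc2 (n-1) (by omega) (by omega)]
          exact hRarc2
        rcases hcover _ hxm1ne hxm1ney with h | h
        · exact absurd h hnotL
        · exact h
      have hllL : x + ((D-1 : ℕ) : Fin n) ∈ L := by
        rw [harc1 (D-1) (by omega) (by omega)]
        exact hb1
      refine ⟨x + ((n-1 : ℕ) : Fin n), x + ((D-1 : ℕ) : Fin n), hr0R, hadjxm1, hllL, hadjyDm1, ?_⟩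
      intro i j hij hiB hjW
      rcases hiB with hi | hi
      · rcases hjW with hj | hj
        · rw [hi, hj] at hij
          exact absurd hij hnadj
        · rw [hi] at hij
          rw [hADJ] at hij
          rcases hij with h | h
          · left
            refine ⟨hi, ?_⟩
            have h2 : j + 1 = (x + ((n-1 : ℕ) : Fin n)) + 1 := by
              rw [← h, add_assoc, hcycm1, add_zero]
            exact add_right_cancel h2
          · exfalso
            have h2 : x + ((1 : ℕ) : Fin n) = j := by rw [h, Nat.cast_one]
            exact Set.disjoint_left.mp hdisj (h2 ▸ hb1) hj
      · rcases hjW with hj | hj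
        · rw [hj] at hij
          rw [hADJ] at hij
          rcases hij with h | h
          · exfalso
            have h2 : i = x + ((D+1 : ℕ) : Fin n) := by
              rw [h, ← hyeq, add_assoc, ← hcastadd]
            exact hRarc2 (h2 ▸ hi)
          · right
            refine ⟨?_, hj⟩
            have h2 : i + 1 = (x + ((D-1 : ℕ) : Fin n)) + 1 := by
              rw [← h, add_assoc, ← hcastadd, show D - 1 + 1 = D from by omega, hyeq]
            exact add_right_cancel h2
        · exfalso
          have hadj' : (deletedCycle n x y).Adj i j :=
            ⟨hij, fun h => hxL (h ▸ hi), fun h => hyL (h ▸ hi),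
             fun h => hxR (h ▸ hj), fun h => hyR (h ▸ hj)⟩
          exact hLR i hi j hj hadj'.reachable
    · -- L is the far arc; r0 = x + 1, llast = y + 1
      have hx1R : x + ((1 : ℕ) : Fin n) ∈ R := by
        rcases hcover _ hx1ne hx1ney with h | h
        · exact absurd h hb1
        · exact h
      have hLarc2 : x + ((D+1 : ℕ) : Fin n) ∈ L := by
        obtain ⟨l, hl⟩ := hLne
        have hlx : l ≠ x := fun h => hxL (h ▸ hl)
        have hly : l ≠ y := fun h => hyL (h ▸ hl)
        obtain ⟨j, hj0, hjn, hjD, hju⟩ := hrep l hlx hly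
        rcases Nat.lt_or_ge j D with h | h
        · exfalso
          apply hb1
          rw [← harc1 j hj0 h, ← hju]
          exact hl
        · rw [← harc2 j (by omega) hjn, ← hju]
          exact hl
      refine ⟨x + ((1 : ℕ) : Fin n), x + ((D+1 : ℕ) : Fin n), hx1R, hadjx1, hLarc2, hadjyD1, ?_⟩
      intro i j hij hiB hjW
      rcases hiB with hi | hi
      · rcases hjW with hj | hj
        · rw [hi, hj] at hij
          exact absurd hij hnadj
        · rw [hi] at hij
          rw [hADJ] at hij
          rcases hij with h | h
          · exfalso
            have h2 : j = x + ((n-1 : ℕ) : Fin n) := by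
              have h3 : j + 1 = (x + ((n-1 : ℕ) : Fin n)) + 1 := by
                rw [← h, add_assoc, hcycm1, add_zero]
              exact add_right_cancel h3
            have h4 : x + ((n-1 : ℕ) : Fin n) ∈ L := by
              rw [harc2 (n-1) (by omega) (by omega)]
              exact hLarc2
            exact Set.disjoint_left.mp hdisj (h2 ▸ h4 : j ∈ L) hj
          · left
            refine ⟨hi, ?_⟩
            rw [h, Nat.cast_one]
      · rcases hjW with hj | hj
        · rw [hj] at hij
          rw [hADJ] at hij
          rcases hij with h | h
          · right
            refine ⟨?_, hj⟩
            rw [h, ← hyeq, add_assoc, ← hcastadd]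
          · exfalso
            have h2 : i = x + ((D-1 : ℕ) : Fin n) := by
              have h3 : i + 1 = (x + ((D-1 : ℕ) : Fin n)) + 1 := by
                rw [← h, add_assoc, ← hcastadd, show D - 1 + 1 = D from by omega, hyeq]
              exact add_right_cancel h3
            apply hb1
            rw [← harc1 (D-1) (by omega) (by omega), ← h2]
            exact hi
        · exfalso
          have hadj' : (deletedCycle n x y).Adj i j :=
            ⟨hij, fun h => hxL (h ▸ hi), fun h => hyL (h ▸ hi),
             fun h => hxR (h ▸ hj), fun h => hyR (h ▸ hj)⟩
          exact hLR i hi j hj hadj'.reachable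
  obtain ⟨r0, llast, hr0R, hxr0adj, hllL, hlladj, huniq⟩ := hkey
  -- ===== Part 3 : colours =====
  set bk : V → Prop := blackD K S (f x) (f y) (f '' L) with hbk
  have hbk_fx : bk (f x) := Or.inl rfl
  have hInA_step : ∀ v w : V, InA K S (f x) (f y) (f '' L) v → K.skeleton.Adj v w →
      w ∉ S → w ≠ f x → w ≠ f y → InA K S (f x) (f y) (f '' L) w := by
    rintro v w ⟨hvS, hvx, hvy, z, hz, p, hp⟩ hadj hwS hwx hwy
    refine ⟨hwS, hwx, hwy, z, hz, p.concat hadj, ?_⟩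
    intro u hu
    rw [SimpleGraph.Walk.support_concat] at hu
    simp only [List.concat_eq_append, List.mem_append, List.mem_singleton] at hu
    rcases hu with h | h
    · exact hp u h
    · subst h; exact ⟨hwS, hwx, hwy⟩
  have hwhiteR : ∀ i, i ∈ R → ¬ bk (f i) := by
    rintro i hiR (h | ⟨hS, hLmem⟩ | hA)
    · exact hxR ((hfinj h) ▸ hiR)
    · obtain ⟨j, hjL, hfej⟩ := hLmem
      have h2 : j ∈ R := by rw [hfinj hfej]; exact hiR
      exact Set.disjoint_left.mp hdisj hjL h2
    · obtain ⟨hS', hx', hy', z, hzim, p, hp⟩ := hA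
      obtain ⟨s, hsS, hsupp⟩ := hsep z (f i) p hzim ⟨i, hiR, rfl⟩
        (fun h => (hp _ h).2.1 rfl) (fun h => (hp _ h).2.2 rfl)
      exact (hp s hsupp).1 hsS
  have hblackL : ∀ i, i ∈ L → bk (f i) := by
    intro i hiL
    by_cases hS : f i ∈ S
    · exact Or.inr (Or.inl ⟨hS, ⟨i, hiL, rfl⟩⟩)
    · refine Or.inr (Or.inr ⟨hS, fun h => hxL (hfinj h ▸ hiL), fun h => hyL (hfinj h ▸ hiL),
        f i, ⟨i, hiL, rfl⟩, SimpleGraph.Walk.nil, ?_⟩)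
      intro z hz
      rw [SimpleGraph.Walk.support_nil, List.mem_singleton] at hz
      subst hz
      exact ⟨hS, fun h => hxL (hfinj h ▸ hiL), fun h => hyL (hfinj h ▸ hiL)⟩
  have hwhitey : ¬ bk (f y) := by
    rintro (h | ⟨hS, -⟩ | ⟨-, -, hy', -⟩)
    · exact hxy (hfinj h).symm
    · exact hSy hS
    · exact hy' rfl
  have hgood_door : ∀ d, IsDoor K bk d → ∃ z ∈ d, (z ∈ S ∨ z = f x ∨ z = f y) := by
    rintro d ⟨⟨t, ht, hdt⟩, u, v, hu, hv, rfl⟩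
    rcases hu with h | ⟨hS, -⟩ | hA
    · exact ⟨u, Finset.mem_insert_self u _, Or.inr (Or.inl h)⟩
    · exact ⟨u, Finset.mem_insert_self u _, Or.inl hS⟩
    · have huv : u ≠ v := fun h => hv (h ▸ (Or.inr (Or.inr hA) : bk u))
      have hadj : K.skeleton.Adj u v :=
        ⟨huv, t, ht, hdt (Finset.mem_insert_self u _),
         hdt (Finset.mem_insert_of_mem (Finset.mem_singleton_self v))⟩
      refine ⟨v, Finset.mem_insert_of_mem (Finset.mem_singleton_self v), ?_⟩
      by_cases hvS : v ∈ S
      · exact Or.inl hvS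
      by_cases hvy : v = f y
      · exact Or.inr (Or.inr hvy)
      by_cases hvx : v = f x
      · exact Or.inr (Or.inl hvx)
      exact absurd (Or.inr (Or.inr (hInA_step u v hA hadj hvS hvx hvy)) : bk v) hv
  have hblack_idx : ∀ i : Fin n, bk (f i) → i = x ∨ i ∈ L := by
    intro i hb
    by_cases hix : i = x
    · exact Or.inl hix
    by_cases hiy : i = y
    · exact absurd (hiy ▸ hb) hwhitey
    rcases hcover i hix hiy with h | h
    · exact Or.inr h
    · exact absurd hb (hwhiteR i h)
  have hwhite_idx : ∀ i : Fin n, ¬ bk (f i) → i = y ∨ i ∈ R := by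
    intro i hw
    by_cases hix : i = x
    · exact absurd (Or.inl (by rw [hix]) : bk (f i)) hw
    by_cases hiy : i = y
    · exact Or.inl hiy
    rcases hcover i hix hiy with h | h
    · exact absurd (hblackL i h) hw
    · exact Or.inr h
  -- ===== Part 4 : the two boundary doors =====
  have hfilter_eq : ∀ u v : V, (K.tris.filter fun t => u ∈ t ∧ v ∈ t) =
      (K.tris.filter fun t => ({u, v} : Finset V) ⊆ t) := by
    intro u v
    ext t
    simp only [Finset.mem_filter, Finset.insert_subset_iff, Finset.singleton_subset_iff]
  have hb0 : K.boundary.Adj (f x) (f r0) := (hbadj x r0).mpr hxr0adj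
  have hb1' : K.boundary.Adj (f llast) (f y) := (hbadj llast y).mpr hlladj
  obtain ⟨t0, ht0⟩ := Finset.card_eq_one.mp hb0.2
  have ht0mem : t0 ∈ K.tris ∧ f x ∈ t0 ∧ f r0 ∈ t0 := by
    have : t0 ∈ K.tris.filter fun t => f x ∈ t ∧ f r0 ∈ t := by
      rw [ht0]; exact Finset.mem_singleton_self t0
    rw [Finset.mem_filter] at this
    exact ⟨this.1, this.2.1, this.2.2⟩
  obtain ⟨t1, ht1⟩ := Finset.card_eq_one.mp hb1'.2
  have ht1mem : t1 ∈ K.tris ∧ f llast ∈ t1 ∧ f y ∈ t1 := by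
    have : t1 ∈ K.tris.filter fun t => f llast ∈ t ∧ f y ∈ t := by
      rw [ht1]; exact Finset.mem_singleton_self t1
    rw [Finset.mem_filter] at this
    exact ⟨this.1, this.2.1, this.2.2⟩
  have he0 : IsDoor K bk ({f x, f r0} : Finset V) :=
    ⟨⟨t0, ht0mem.1, Finset.insert_subset_iff.mpr
        ⟨ht0mem.2.1, Finset.singleton_subset_iff.mpr ht0mem.2.2⟩⟩,
     f x, f r0, hbk_fx, hwhiteR r0 hr0R, rfl⟩
  have he1 : IsDoor K bk ({f llast, f y} : Finset V) :=
    ⟨⟨t1, ht1mem.1, Finset.insert_subset_iff.mpr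
        ⟨ht1mem.2.1, Finset.singleton_subset_iff.mpr ht1mem.2.2⟩⟩,
     f llast, f y, hblackL llast hllL, hwhitey, rfl⟩
  have hdeg0 : (doorGraph K bk).degree ({f x, f r0} : Finset V) = 1 := by
    rw [doorGraph_degree K bk _ he0, ← hfilter_eq]
    exact hb0.2
  have hodd_bd : ∀ d : Finset V, Odd ((doorGraph K bk).degree d) →
      d = ({f x, f r0} : Finset V) ∨ d = ({f llast, f y} : Finset V) := by
    intro d hodd
    by_cases hdoor : IsDoor K bk d
    swap
    · rw [doorGraph_degree_nondoor K bk d hdoor] at hodd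
      simp at hodd
    rw [doorGraph_degree K bk d hdoor] at hodd
    obtain ⟨⟨t, ht, hdt⟩, u, v, hu, hv, hduv⟩ := hdoor
    have huv : u ≠ v := fun h => hv (h ▸ hu)
    have hcard1 : (K.tris.filter fun t => d ⊆ t).card = 1 := by
      rcases K.edge_mem d (by rw [hduv]; exact Finset.card_pair huv) ⟨t, ht, hdt⟩ with h | h
      · exact h
      · rw [h] at hodd
        exact absurd hodd (by decide)
    have hbadjuv : K.boundary.Adj u v := by
      refine ⟨huv, ?_⟩
      rw [hfilter_eq, ← hduv]
      exact hcard1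
    obtain ⟨⟨i, hi⟩, ⟨j, hj⟩⟩ := hbim u v hbadjuv
    subst hi; subst hj
    have hcyc : (SimpleGraph.cycleGraph n).Adj i j := (hbadj i j).mp hbadjuv
    rcases huniq i j hcyc (hblack_idx i hu) (hwhite_idx j hv) with ⟨h1, h2⟩ | ⟨h1, h2⟩
    · left; rw [hduv, h1, h2]
    · right; rw [hduv, h1, h2]
  -- ===== Part 5 : reachability in the door graph and conclusion =====
  have hodd1 : Odd ((doorGraph K bk).degree ({f x, f r0} : Finset V)) := by
    rw [hdeg0]; exact odd_one
  obtain ⟨b, hbne, hreach, hbodd⟩ := odd_reachable (doorGraph K bk) _ hodd1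
  have hbe1 : b = ({f llast, f y} : Finset V) := by
    rcases hodd_bd b hbodd with h | h
    · exact absurd h hbne
    · exact h
  subst hbe1
  obtain ⟨p⟩ := hreach
  obtain ⟨z, hz, hgz, q, hq⟩ := walk_lift K bk (fun v => v ∈ S ∨ v = f x ∨ v = f y)
    hgood_door p (f y)
    (Finset.mem_insert_of_mem (Finset.mem_singleton_self _)) (Or.inr (Or.inr rfl)) he0
  have hzcase : z = f x ∨ z = f r0 := by
    rcases Finset.mem_insert.mp hz with h | h
    · exact Or.inl h
    · exact Or.inr (Finset.mem_singleton.mp h)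
  have hfinal : ∃ q' : K.skeleton.Walk (f x) (f y),
      ∀ w ∈ q'.support, w ∈ S ∨ w = f x ∨ w = f y := by
    rcases hzcase with hz' | hz'
    · subst hz'
      exact ⟨q, hq⟩
    · subst hz'
      have hadjx : K.skeleton.Adj (f x) (f r0) :=
        ⟨hb0.1, t0, ht0mem.1, ht0mem.2.1, ht0mem.2.2⟩
      refine ⟨SimpleGraph.Walk.cons hadjx q, ?_⟩
      intro w hw
      rw [SimpleGraph.Walk.support_cons, List.mem_cons] at hw
      rcases hw with h | h
      · exact Or.inr (Or.inl h)
      · exact hq w h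
  obtain ⟨q', hq'⟩ := hfinal
  refine ⟨q'.toPath.1, q'.toPath.2, ?_⟩
  intro v hv hvx hvy
  rcases hq' v (SimpleGraph.Walk.support_toPath_subset q' hv) with h | h | h
  · exact h
  · exact absurd h hvx
  · exact absurd h hvy
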